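/- The coherence quantifier C_{1/2} dominates twice the geometric coherence: C_{1/2}(ρ) ≥ 2 C_g(ρ) for any invertible density matrix ρ, where C_{1/2}(ρ) = min_{σ∈I} 2(1 − (Tr[ρ^{1/2}(ρ^{-1/2}σρ^{-1/2})^{1/2}ρ^{1/2}])²) and C_g(ρ) = 1 − max_{σ∈I} F(ρ,σ). -/

import Mathlib

open Matrix
open scoped ComplexOrder

/-- Real power of a Hermitian matrix via its spectral decomposition
(defined to be `0` on non-Hermitian matrices). -/
noncomputable def mpow {d : ℕ} (A : Matrix (Fin d) (Fin d) ℂ) (r : ℝ) :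
    Matrix (Fin d) (Fin d) ℂ :=
  if hA : A.IsHermitian then
    (hA.eigenvectorUnitary : Matrix (Fin d) (Fin d) ℂ) *
      Matrix.diagonal (fun i => ((hA.eigenvalues i ^ r : ℝ) : ℂ)) *
      star (hA.eigenvectorUnitary : Matrix (Fin d) (Fin d) ℂ)
  else 0

/-- The Tsallis relative operator entropy
`T_q(ρ‖σ) = (ρ^{1/2} (ρ^{-1/2} σ ρ^{-1/2})^{1-q} ρ^{1/2} - ρ)/(1-q)`. -/
noncomputable def Tq {d : ℕ} (ρ σ : Matrix (Fin d) (Fin d) ℂ) (q : ℝ) :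
    Matrix (Fin d) (Fin d) ℂ :=
  (((1 - q : ℝ) : ℂ))⁻¹ •
    (mpow ρ (1/2) * mpow (mpow ρ (-(1/2)) * σ * mpow ρ (-(1/2))) (1 - q) * mpow ρ (1/2) - ρ)


/-- `f_{1/2}(ρ,σ) = Tr[ρ^{1/2} (ρ^{-1/2} σ ρ^{-1/2})^{1/2} ρ^{1/2}]`. -/
noncomputable def fhalf {d : ℕ} (ρ σ : Matrix (Fin d) (Fin d) ℂ) : ℝ :=
  (mpow ρ (1/2) * mpow (mpow ρ (-(1/2)) * σ * mpow ρ (-(1/2))) (1/2) * mpow ρ (1/2)).trace.re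

/-- The Uhlmann fidelity `F(ρ,σ) = (Tr (ρ^{1/2} σ ρ^{1/2})^{1/2})²`. -/
noncomputable def Fid {d : ℕ} (ρ σ : Matrix (Fin d) (Fin d) ℂ) : ℝ :=
  ((mpow (mpow ρ (1/2) * σ * mpow ρ (1/2)) (1/2)).trace.re) ^ 2

namespace ChalfAux


variable {d : ℕ}

lemma mpow_eq {A : Matrix (Fin d) (Fin d) ℂ} (hA : A.IsHermitian) (r : ℝ) :
    mpow A r = (hA.eigenvectorUnitary : Matrix (Fin d) (Fin d) ℂ) *
      Matrix.diagonal (fun i => ((hA.eigenvalues i ^ r : ℝ) : ℂ)) *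
      star (hA.eigenvectorUnitary : Matrix (Fin d) (Fin d) ℂ) := dif_pos hA

lemma conj_mul {U D₁ D₂ : Matrix (Fin d) (Fin d) ℂ} (hU : star U * U = 1) :
    (U * D₁ * star U) * (U * D₂ * star U) = U * (D₁ * D₂) * star U := by
  simp only [mul_assoc]
  rw [← mul_assoc (star U) U, hU, one_mul]

lemma conj_star {U : Matrix (Fin d) (Fin d) ℂ} (f : Fin d → ℝ) :
    star (U * Matrix.diagonal (fun i => ((f i : ℝ) : ℂ)) * star U)
      = U * Matrix.diagonal (fun i => ((f i : ℝ) : ℂ)) * star U := by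
  have hd : star (Matrix.diagonal (fun i => ((f i : ℝ) : ℂ))) = Matrix.diagonal (fun i => ((f i : ℝ) : ℂ)) := by
    ext i j
    simp only [star_eq_conjTranspose, conjTranspose_apply, diagonal_apply, Complex.conj_ofReal]
    by_cases h : i = j
    · subst h; simp
    · simp [h, Ne.symm h]
  calc star (U * Matrix.diagonal (fun i => ((f i : ℝ) : ℂ)) * star U)
      = star (star U) * (star (Matrix.diagonal (fun i => ((f i : ℝ) : ℂ))) * star U) := by
        rw [Matrix.star_mul, Matrix.star_mul]
    _ = U * Matrix.diagonal (fun i => ((f i : ℝ) : ℂ)) * star U := by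
        rw [star_star, hd, ← mul_assoc]

lemma conj_trace {U : Matrix (Fin d) (Fin d) ℂ} (hU : star U * U = 1) (f : Fin d → ℝ) :
    (U * Matrix.diagonal (fun i => ((f i : ℝ) : ℂ)) * star U).trace = ((∑ i, f i : ℝ) : ℂ) := by
  rw [trace_mul_cycle, hU, one_mul, trace_diagonal]
  push_cast
  rfl

lemma conj_psd {U : Matrix (Fin d) (Fin d) ℂ} (f : Fin d → ℝ) (hf : ∀ i, 0 ≤ f i) :
    (U * Matrix.diagonal (fun i => ((f i : ℝ) : ℂ)) * star U).PosSemidef := by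
  rw [star_eq_conjTranspose]
  exact (posSemidef_diagonal_iff.mpr fun i => Complex.zero_le_real.2 (hf i)).mul_mul_conjTranspose_same U

lemma mpow_isHermitian {A : Matrix (Fin d) (Fin d) ℂ} (hA : A.IsHermitian) (r : ℝ) :
    star (mpow A r) = mpow A r := by
  rw [mpow_eq hA r]; exact conj_star _

lemma mpow_psd {A : Matrix (Fin d) (Fin d) ℂ} (hA : A.PosSemidef) (r : ℝ) :
    (mpow A r).PosSemidef := by
  rw [mpow_eq hA.1 r]
  exact conj_psd _ fun i => Real.rpow_nonneg (hA.eigenvalues_nonneg i) r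

lemma mpow_trace {A : Matrix (Fin d) (Fin d) ℂ} (hA : A.IsHermitian) (r : ℝ) :
    (mpow A r).trace = ((∑ i, hA.eigenvalues i ^ r : ℝ) : ℂ) := by
  rw [mpow_eq hA r]
  exact conj_trace (Matrix.UnitaryGroup.star_mul_self _) _

lemma spectral {A : Matrix (Fin d) (Fin d) ℂ} (hA : A.IsHermitian) :
    A = (hA.eigenvectorUnitary : Matrix (Fin d) (Fin d) ℂ) *
      Matrix.diagonal (fun i => ((hA.eigenvalues i : ℝ) : ℂ)) *
      star (hA.eigenvectorUnitary : Matrix (Fin d) (Fin d) ℂ) := by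
  convert hA.spectral_theorem using 2
  rw [Unitary.conjStarAlgAut_apply]; rfl

/-- For positive semidefinite `A`, `A^{1/2} A^{1/2} = A`. -/
lemma mpow_half_mul_self {A : Matrix (Fin d) (Fin d) ℂ} (hA : A.PosSemidef) :
    mpow A (1/2) * mpow A (1/2) = A := by
  rw [mpow_eq hA.1, conj_mul (Matrix.UnitaryGroup.star_mul_self _), diagonal_mul_diagonal]
  have hfun : (fun i => ((hA.1.eigenvalues i ^ ((1:ℝ)/2) : ℝ) : ℂ) * ((hA.1.eigenvalues i ^ ((1:ℝ)/2) : ℝ) : ℂ))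
      = fun i => ((hA.1.eigenvalues i : ℝ) : ℂ) := by
    funext i
    rcases eq_or_lt_of_le (hA.eigenvalues_nonneg i) with h | h
    · rw [← h]; norm_num
    · rw [← Complex.ofReal_mul, ← Real.rpow_add h]
      norm_num
  rw [hfun]
  exact (spectral hA.1).symm

/-- For positive definite `A`, `mpow A r * mpow A s = mpow A (r+s)`. -/
lemma mpow_add {A : Matrix (Fin d) (Fin d) ℂ} (hA : A.PosDef) (r s : ℝ) :
    mpow A r * mpow A s = mpow A (r + s) := by
  rw [mpow_eq hA.1 r, mpow_eq hA.1 s, mpow_eq hA.1 (r+s),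
    conj_mul (Matrix.UnitaryGroup.star_mul_self _), diagonal_mul_diagonal]
  have hfun : (fun i => ((hA.1.eigenvalues i ^ r : ℝ) : ℂ) * ((hA.1.eigenvalues i ^ s : ℝ) : ℂ))
      = fun i => ((hA.1.eigenvalues i ^ (r + s) : ℝ) : ℂ) := by
    funext i
    rw [← Complex.ofReal_mul, ← Real.rpow_add (hA.eigenvalues_pos i)]
  rw [hfun]

lemma mpow_zero {A : Matrix (Fin d) (Fin d) ℂ} (hA : A.IsHermitian) :
    mpow A 0 = 1 := by
  rw [mpow_eq hA]
  simp only [Real.rpow_zero, Complex.ofReal_one, diagonal_one, mul_one]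
  exact mem_unitaryGroup_iff.mp hA.eigenvectorUnitary.2

lemma mpow_one {A : Matrix (Fin d) (Fin d) ℂ} (hA : A.IsHermitian) :
    mpow A 1 = A := by
  rw [mpow_eq hA]
  simp only [Real.rpow_one]
  exact (spectral hA).symm


set_option maxHeartbeats 1000000 in
lemma re_trace_cs (X Y : Matrix (Fin d) (Fin d) ℂ) :
    ((Xᴴ * Y).trace).re ≤ Real.sqrt ((Xᴴ * X).trace.re) * Real.sqrt ((Yᴴ * Y).trace.re) := by
  have hexp : ∀ (Z W : Matrix (Fin d) (Fin d) ℂ),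
      ((Zᴴ * W).trace).re = ∑ j, ∑ i, ((starRingEnd ℂ) (Z i j) * W i j).re := by
    intro Z W
    simp only [Matrix.trace, Matrix.diag, Matrix.mul_apply, Matrix.conjTranspose_apply,
      RCLike.star_def, Complex.re_sum]
  have habs : ∀ (Z : Matrix (Fin d) (Fin d) ℂ) (j i : Fin d),
      ((starRingEnd ℂ) (Z i j) * Z i j).re = ‖Z i j‖ ^ 2 := by
    intro Z j i
    rw [mul_comm, Complex.mul_conj, Complex.ofReal_re, Complex.normSq_eq_norm_sq]
  rw [hexp X Y, hexp X X, hexp Y Y]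
  simp only [habs]
  have step1 : (∑ j, ∑ i, ((starRingEnd ℂ) (X i j) * Y i j).re)
      ≤ ∑ j, ∑ i, ‖X i j‖ * ‖Y i j‖ := by
    refine Finset.sum_le_sum fun j _ => Finset.sum_le_sum fun i _ => ?_
    calc ((starRingEnd ℂ) (X i j) * Y i j).re ≤ ‖(starRingEnd ℂ) (X i j) * Y i j‖ :=
          Complex.re_le_norm _
      _ = ‖X i j‖ * ‖Y i j‖ := by
          rw [norm_mul, Complex.norm_conj]
  refine step1.trans ?_
  have := Real.sum_mul_le_sqrt_mul_sqrt (Finset.univ : Finset (Fin d × Fin d))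
    (fun p => ‖X p.2 p.1‖) (fun p => ‖Y p.2 p.1‖)
  calc ∑ j, ∑ i, ‖X i j‖ * ‖Y i j‖
      = ∑ p : Fin d × Fin d, ‖X p.2 p.1‖ * ‖Y p.2 p.1‖ :=
        (Fintype.sum_prod_type
          (fun p : Fin d × Fin d => ‖X p.2 p.1‖ * ‖Y p.2 p.1‖)).symm
    _ ≤ Real.sqrt (∑ p : Fin d × Fin d, ‖X p.2 p.1‖ ^ 2) *
        Real.sqrt (∑ p : Fin d × Fin d, ‖Y p.2 p.1‖ ^ 2) := this
    _ = Real.sqrt (∑ j, ∑ i, ‖X i j‖ ^ 2) *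
        Real.sqrt (∑ j, ∑ i, ‖Y i j‖ ^ 2) := by
        rw [Fintype.sum_prod_type (fun p : Fin d × Fin d => ‖X p.2 p.1‖ ^ 2),
          Fintype.sum_prod_type (fun p : Fin d × Fin d => ‖Y p.2 p.1‖ ^ 2)]

lemma sqrt_rpow_add_le {a b : ℝ} (ha : 0 ≤ a) (hb : 0 ≤ b) :
    (a + b) ^ ((1:ℝ)/2) ≤ a ^ ((1:ℝ)/2) + b ^ ((1:ℝ)/2) := by
  rw [← Real.sqrt_eq_rpow, ← Real.sqrt_eq_rpow, ← Real.sqrt_eq_rpow]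
  have h1 : a + b ≤ (Real.sqrt a + Real.sqrt b) ^ 2 := by
    nlinarith [Real.sq_sqrt ha, Real.sq_sqrt hb, Real.sqrt_nonneg a, Real.sqrt_nonneg b]
  calc Real.sqrt (a + b) ≤ Real.sqrt ((Real.sqrt a + Real.sqrt b) ^ 2) := Real.sqrt_le_sqrt h1
    _ = Real.sqrt a + Real.sqrt b := Real.sqrt_sq (by positivity)


/-- conjugation of a real diagonal by a fixed matrix -/
noncomputable def cnj (U : Matrix (Fin d) (Fin d) ℂ) (g : Fin d → ℝ) :
    Matrix (Fin d) (Fin d) ℂ :=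
  U * Matrix.diagonal (fun i => ((g i : ℝ) : ℂ)) * star U

lemma cnj_mul {U : Matrix (Fin d) (Fin d) ℂ} (hU : star U * U = 1) (g h : Fin d → ℝ) :
    cnj U g * cnj U h = cnj U (fun i => g i * h i) := by
  unfold cnj
  rw [conj_mul hU, diagonal_mul_diagonal]
  have : (fun i => ((g i : ℝ) : ℂ) * ((h i : ℝ) : ℂ)) = fun i => ((g i * h i : ℝ) : ℂ) :=
    funext fun i => (Complex.ofReal_mul _ _).symm
  rw [this]

lemma cnj_star {U : Matrix (Fin d) (Fin d) ℂ} (g : Fin d → ℝ) :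
    star (cnj U g) = cnj U g := conj_star _

lemma cnj_trace {U : Matrix (Fin d) (Fin d) ℂ} (hU : star U * U = 1) (g : Fin d → ℝ) :
    (cnj U g).trace = ((∑ i, g i : ℝ) : ℂ) := conj_trace hU g

set_option maxHeartbeats 1000000 in
lemma re_trace_le_trace_sqrt {B K : Matrix (Fin d) (Fin d) ℂ} (hK : K.PosSemidef)
    (hBB : B * Bᴴ = K) :
    B.trace.re ≤ (mpow K (1/2)).trace.re := by
  have hμ : ∀ i, 0 ≤ hK.1.eigenvalues i := hK.eigenvalues_nonneg
  have hRHS : (mpow K (1/2)).trace.re = ∑ i, hK.1.eigenvalues i ^ ((1:ℝ)/2) := by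
    rw [mpow_trace hK.1, Complex.ofReal_re]
  rw [hRHS]
  set μ := hK.1.eigenvalues with hμdef
  set U := (hK.1.eigenvectorUnitary : Matrix (Fin d) (Fin d) ℂ) with hUdef
  have hU : star U * U = 1 := Matrix.UnitaryGroup.star_mul_self _
  have hU' : U * star U = 1 := mem_unitaryGroup_iff.mp hK.1.eigenvectorUnitary.2
  have key : ∀ ε : ℝ, 0 < ε → B.trace.re ≤ ∑ i, (μ i + ε) ^ ((1:ℝ)/2) := by
    intro ε hε
    have hpos : ∀ i, (0:ℝ) < μ i + ε := fun i => add_pos_of_nonneg_of_pos (hμ i) hε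
    have hNmul : ∀ s t : ℝ, cnj U (fun i => (μ i + ε) ^ s) * cnj U (fun i => (μ i + ε) ^ t)
        = cnj U (fun i => (μ i + ε) ^ (s + t)) := by
      intro s t
      rw [cnj_mul hU]
      have : (fun i => (μ i + ε) ^ s * (μ i + ε) ^ t) = fun i => (μ i + ε) ^ (s + t) :=
        funext fun i => (Real.rpow_add (hpos i) s t).symm
      rw [this]
    have hN0 : cnj U (fun i => (μ i + ε) ^ (0:ℝ)) = 1 := by
      unfold cnj
      have : (fun i => (((μ i + ε) ^ (0:ℝ) : ℝ) : ℂ)) = fun _ => (1:ℂ) := by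
        funext i
        rw [Real.rpow_zero]
        norm_num
      rw [this, diagonal_one, mul_one, hU']
    have hX : (cnj U (fun i => (μ i + ε) ^ ((1:ℝ)/4)))ᴴ *
        (cnj U (fun i => (μ i + ε) ^ (-(1:ℝ)/4)) * B) = B := by
      rw [← star_eq_conjTranspose, cnj_star, ← mul_assoc, hNmul]
      have h4 : (1:ℝ)/4 + -(1:ℝ)/4 = 0 := by norm_num
      rw [h4, hN0, one_mul]
    have hKspec : K = cnj U μ := spectral hK.1
    have hNK : (cnj U (fun i => (μ i + ε) ^ (-(1:ℝ)/2)) * K).trace.re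
        = ∑ i, (μ i + ε) ^ (-(1:ℝ)/2) * μ i := by
      conv_lhs => rw [hKspec]
      rw [cnj_mul hU, cnj_trace hU, Complex.ofReal_re]
    have t1 : ((cnj U (fun i => (μ i + ε) ^ ((1:ℝ)/4)))ᴴ *
        cnj U (fun i => (μ i + ε) ^ ((1:ℝ)/4))).trace.re = ∑ i, (μ i + ε) ^ ((1:ℝ)/2) := by
      rw [← star_eq_conjTranspose, cnj_star, hNmul]
      have h4 : (1:ℝ)/4 + (1:ℝ)/4 = (1:ℝ)/2 := by norm_num
      rw [h4, cnj_trace hU, Complex.ofReal_re]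
    have t2le : ((cnj U (fun i => (μ i + ε) ^ (-(1:ℝ)/4)) * B)ᴴ *
        (cnj U (fun i => (μ i + ε) ^ (-(1:ℝ)/4)) * B)).trace.re
        ≤ ∑ i, (μ i + ε) ^ ((1:ℝ)/2) := by
      have e1 : (cnj U (fun i => (μ i + ε) ^ (-(1:ℝ)/4)) * B)ᴴ *
          (cnj U (fun i => (μ i + ε) ^ (-(1:ℝ)/4)) * B)
          = Bᴴ * cnj U (fun i => (μ i + ε) ^ (-(1:ℝ)/2)) * B := by
        have h4 : -(1:ℝ)/4 + -(1:ℝ)/4 = -(1:ℝ)/2 := by norm_num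
        calc (cnj U (fun i => (μ i + ε) ^ (-(1:ℝ)/4)) * B)ᴴ *
            (cnj U (fun i => (μ i + ε) ^ (-(1:ℝ)/4)) * B)
            = Bᴴ * (cnj U (fun i => (μ i + ε) ^ (-(1:ℝ)/4)) *
              (cnj U (fun i => (μ i + ε) ^ (-(1:ℝ)/4)) * B)) := by
              rw [conjTranspose_mul, ← star_eq_conjTranspose
                (cnj U (fun i => (μ i + ε) ^ (-(1:ℝ)/4))), cnj_star, mul_assoc]
          _ = Bᴴ * (cnj U (fun i => (μ i + ε) ^ (-(1:ℝ)/2)) * B) := by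
              rw [← mul_assoc (cnj U (fun i => (μ i + ε) ^ (-(1:ℝ)/4))), hNmul, h4]
          _ = Bᴴ * cnj U (fun i => (μ i + ε) ^ (-(1:ℝ)/2)) * B := by rw [mul_assoc]
      have e2 : (Bᴴ * cnj U (fun i => (μ i + ε) ^ (-(1:ℝ)/2)) * B).trace
          = (cnj U (fun i => (μ i + ε) ^ (-(1:ℝ)/2)) * K).trace := by
        rw [trace_mul_cycle, hBB, trace_mul_comm]
      rw [e1, e2, hNK]
      refine Finset.sum_le_sum fun i _ => ?_
      have h1 : (μ i + ε) ^ (-(1:ℝ)/2) * μ i ≤ (μ i + ε) ^ (-(1:ℝ)/2) * (μ i + ε) :=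
        mul_le_mul_of_nonneg_left (by linarith) (Real.rpow_nonneg (hpos i).le _)
      refine h1.trans_eq ?_
      nth_rewrite 2 [← Real.rpow_one (μ i + ε)]
      rw [← Real.rpow_add (hpos i)]
      norm_num
    calc B.trace.re
        = ((cnj U (fun i => (μ i + ε) ^ ((1:ℝ)/4)))ᴴ *
          (cnj U (fun i => (μ i + ε) ^ (-(1:ℝ)/4)) * B)).trace.re := by rw [hX]
      _ ≤ Real.sqrt (((cnj U (fun i => (μ i + ε) ^ ((1:ℝ)/4)))ᴴ *
            cnj U (fun i => (μ i + ε) ^ ((1:ℝ)/4))).trace.re) *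
          Real.sqrt (((cnj U (fun i => (μ i + ε) ^ (-(1:ℝ)/4)) * B)ᴴ *
            (cnj U (fun i => (μ i + ε) ^ (-(1:ℝ)/4)) * B)).trace.re) := re_trace_cs _ _
      _ ≤ Real.sqrt (∑ i, (μ i + ε) ^ ((1:ℝ)/2)) *
          Real.sqrt (∑ i, (μ i + ε) ^ ((1:ℝ)/2)) := by
          rw [t1]
          exact mul_le_mul_of_nonneg_left (Real.sqrt_le_sqrt t2le) (Real.sqrt_nonneg _)
      _ = ∑ i, (μ i + ε) ^ ((1:ℝ)/2) :=
          Real.mul_self_sqrt (Finset.sum_nonneg fun i _ => Real.rpow_nonneg (hpos i).le _)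
  refine le_of_forall_pos_le_add fun ε hε => ?_
  have hd1 : (0:ℝ) < (d:ℝ) + 1 := by positivity
  set δ := (ε / ((d:ℝ)+1))^2 with hδdef
  have hδ : 0 < δ := by positivity
  calc B.trace.re ≤ ∑ i, (μ i + δ) ^ ((1:ℝ)/2) := key δ hδ
    _ ≤ ∑ i, (μ i ^ ((1:ℝ)/2) + δ ^ ((1:ℝ)/2)) :=
        Finset.sum_le_sum fun i _ => sqrt_rpow_add_le (hμ i) hδ.le
    _ = (∑ i, μ i ^ ((1:ℝ)/2)) + (d:ℝ) * δ ^ ((1:ℝ)/2) := by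
        rw [Finset.sum_add_distrib, Finset.sum_const, Finset.card_univ, Fintype.card_fin,
          nsmul_eq_mul]
    _ ≤ (∑ i, μ i ^ ((1:ℝ)/2)) + ε := by
        have hδ2 : δ ^ ((1:ℝ)/2) = ε / ((d:ℝ)+1) := by
          rw [hδdef, ← Real.sqrt_eq_rpow, Real.sqrt_sq (by positivity)]
        rw [hδ2]
        have hle : (d:ℝ) * (ε/((d:ℝ)+1)) ≤ ε := by
          have h : (d:ℝ) ≤ (d:ℝ) + 1 := by linarith
          calc (d:ℝ) * (ε/((d:ℝ)+1)) ≤ ((d:ℝ)+1) * (ε/((d:ℝ)+1)) :=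
                mul_le_mul_of_nonneg_right h (by positivity)
            _ = ε := by field_simp
        linarith


lemma trace_re_nonneg_of_psd {A : Matrix (Fin d) (Fin d) ℂ} (hA : A.PosSemidef) :
    0 ≤ A.trace.re := by
  have h : A.trace = ((∑ i, hA.1.eigenvalues i : ℝ) : ℂ) := by
    conv_lhs => rw [spectral hA.1]
    exact conj_trace (Matrix.UnitaryGroup.star_mul_self _) _
  rw [h, Complex.ofReal_re]
  exact Finset.sum_nonneg fun i _ => hA.eigenvalues_nonneg i

lemma diag_re_nonneg {A : Matrix (Fin d) (Fin d) ℂ} (hA : A.PosSemidef) (i : Fin d) :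
    0 ≤ (A i i).re := by
  have h := hA.dotProduct_mulVec_nonneg (Pi.single i 1)
  have hee : star (Pi.single i 1 : Fin d → ℂ) ⬝ᵥ (A *ᵥ Pi.single i 1) = A i i := by
    simp [dotProduct, mulVec, Pi.single_apply]
  rw [hee] at h
  simpa using (Complex.le_def.mp h).1

set_option maxHeartbeats 1000000 in
lemma fhalf_sq_le_Fid (ρ : Matrix (Fin d) (Fin d) ℂ) (hρ : ρ.PosDef)
    (p : Fin d → ℝ) (hp : ∀ i, 0 ≤ p i) :
    (fhalf ρ (Matrix.diagonal (fun i => (p i : ℂ)))) ^ 2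
      ≤ Fid ρ (Matrix.diagonal (fun i => (p i : ℂ))) := by
  have hρh : ρ.IsHermitian := hρ.1
  set σ := Matrix.diagonal (fun i => (p i : ℂ)) with hσdef
  have hσpsd : σ.PosSemidef := posSemidef_diagonal_iff.mpr fun i => Complex.zero_le_real.2 (hp i)
  set R := mpow ρ (1/2) with hRdef
  set Rinv := mpow ρ (-(1/2)) with hRidef
  have hRstar : star R = R := mpow_isHermitian hρh _
  have hRinvstar : star Rinv = Rinv := mpow_isHermitian hρh _
  have hRR : R * R = ρ := by
    rw [hRdef, mpow_add hρ]
    have : (1/2 + 1/2 : ℝ) = 1 := by norm_num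
    rw [this, mpow_one hρh]
  have hRRinv : R * Rinv = 1 := by
    rw [hRdef, hRidef, mpow_add hρ]
    have : (1/2 + -(1/2) : ℝ) = 0 := by norm_num
    rw [this, mpow_zero hρh]
  have hRinvR : Rinv * R = 1 := by
    rw [hRdef, hRidef, mpow_add hρ]
    have : (-(1/2) + 1/2 : ℝ) = 0 := by norm_num
    rw [this, mpow_zero hρh]
  set M := Rinv * σ * Rinv with hMdef
  have hMpsd : M.PosSemidef := by
    have := hσpsd.mul_mul_conjTranspose_same Rinv
    rwa [← star_eq_conjTranspose, hRinvstar] at this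
  set S := mpow M (1/2) with hSdef
  have hSpsd : S.PosSemidef := mpow_psd hMpsd _
  have hSS : S * S = M := mpow_half_mul_self hMpsd
  have hSstar : Sᴴ = S := by
    rw [← star_eq_conjTranspose]
    exact mpow_isHermitian hMpsd.1 _
  set K := R * σ * R with hKdef
  have hKpsd : K.PosSemidef := by
    have := hσpsd.mul_mul_conjTranspose_same R
    rwa [← star_eq_conjTranspose, hRstar] at this
  have h1 : ρ * M * ρ = K := by
    rw [hMdef, hKdef, ← hRR]
    simp only [mul_assoc]
    rw [← mul_assoc R Rinv, hRRinv, one_mul, ← mul_assoc Rinv R, hRinvR, one_mul]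
  have hBB : (ρ * S) * (ρ * S)ᴴ = K := by
    calc (ρ * S) * (ρ * S)ᴴ = ρ * S * (S * ρ) := by
          rw [conjTranspose_mul, hSstar, hρh.eq]
      _ = ρ * (S * S) * ρ := by simp only [mul_assoc]
      _ = ρ * M * ρ := by rw [hSS]
      _ = K := h1
  have htr : (R * S * R).trace = (ρ * S).trace := by
    rw [trace_mul_cycle, hRR]
  have hfhalf : fhalf ρ σ = (ρ * S).trace.re := by
    show (R * S * R).trace.re = (ρ * S).trace.re
    rw [htr]
  have hfid : Fid ρ σ = ((mpow K (1/2)).trace.re) ^ 2 := rfl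
  have hRSRpsd : (R * S * R).PosSemidef := by
    have := hSpsd.mul_mul_conjTranspose_same R
    rwa [← star_eq_conjTranspose, hRstar] at this
  have hpos1 : 0 ≤ (ρ * S).trace.re := by
    rw [← htr]
    exact trace_re_nonneg_of_psd hRSRpsd
  have hcore : (ρ * S).trace.re ≤ (mpow K (1/2)).trace.re :=
    re_trace_le_trace_sqrt hKpsd hBB
  rw [hfhalf, hfid]
  exact pow_le_pow_left₀ hpos1 hcore 2

set_option maxHeartbeats 1000000 in
lemma Fid_le_bound (ρ : Matrix (Fin d) (Fin d) ℂ) (hρ : ρ.PosDef) (hρtr : ρ.trace = 1)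
    (p : Fin d → ℝ) (hp : ∀ i, 0 ≤ p i) (hps : ∑ i, p i = 1) :
    Fid ρ (Matrix.diagonal (fun i => (p i : ℂ))) ≤ ((d:ℝ) + 1) ^ 2 := by
  have hρh : ρ.IsHermitian := hρ.1
  set σ := Matrix.diagonal (fun i => (p i : ℂ)) with hσdef
  have hσpsd : σ.PosSemidef := posSemidef_diagonal_iff.mpr fun i => Complex.zero_le_real.2 (hp i)
  set R := mpow ρ (1/2) with hRdef
  have hRstar : star R = R := mpow_isHermitian hρh _
  have hRR : R * R = ρ := by
    rw [hRdef, mpow_add hρ]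
    have : (1/2 + 1/2 : ℝ) = 1 := by norm_num
    rw [this, mpow_one hρh]
  set K := R * σ * R with hKdef
  have hKpsd : K.PosSemidef := by
    have := hσpsd.mul_mul_conjTranspose_same R
    rwa [← star_eq_conjTranspose, hRstar] at this
  set μ := hKpsd.1.eigenvalues with hμdef
  have hμ : ∀ i, 0 ≤ μ i := hKpsd.eigenvalues_nonneg
  -- trace of K
  have hKtr : K.trace = (ρ * σ).trace := by
    rw [hKdef, trace_mul_cycle, hRR]
  have hρσ : (ρ * σ).trace.re = ∑ i, p i * (ρ i i).re := by
    rw [Matrix.trace, Complex.re_sum]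
    refine Finset.sum_congr rfl fun i _ => ?_
    rw [Matrix.diag_apply, Matrix.mul_apply]
    rw [Finset.sum_eq_single i]
    · rw [hσdef, Matrix.diagonal_apply_eq, mul_comm, Complex.re_ofReal_mul]
    · intro j _ hj
      rw [hσdef, Matrix.diagonal_apply_ne _ hj, mul_zero]
    · intro h
      exact absurd (Finset.mem_univ i) h
  have hdiag_le : ∀ i, (ρ i i).re ≤ 1 := by
    intro i
    have h1 : ∑ j, (ρ j j).re = 1 := by
      have : ρ.trace.re = 1 := by rw [hρtr]; norm_num
      rw [← this, Matrix.trace, Complex.re_sum]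
      rfl
    rw [← h1]
    exact Finset.single_le_sum (fun j _ => diag_re_nonneg hρ.posSemidef j) (Finset.mem_univ i)
  have hsum_μ : ∑ i, μ i ≤ 1 := by
    have h2 : ∑ i, μ i = K.trace.re := by
      have h : K.trace = ((∑ i, μ i : ℝ) : ℂ) := by
        conv_lhs => rw [spectral hKpsd.1]
        exact conj_trace (Matrix.UnitaryGroup.star_mul_self _) _
      rw [h, Complex.ofReal_re]
    rw [h2, hKtr, hρσ]
    calc ∑ i, p i * (ρ i i).re ≤ ∑ i, p i * 1 :=
          Finset.sum_le_sum fun i _ => mul_le_mul_of_nonneg_left (hdiag_le i) (hp i)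
      _ = 1 := by simpa using hps
  have htrsq : (mpow K (1/2)).trace.re = ∑ i, μ i ^ ((1:ℝ)/2) := by
    rw [mpow_trace hKpsd.1, Complex.ofReal_re]
  have hb : (mpow K (1/2)).trace.re ≤ (d:ℝ) + 1 := by
    rw [htrsq]
    calc ∑ i, μ i ^ ((1:ℝ)/2) ≤ ∑ i, (1 + μ i) := by
          refine Finset.sum_le_sum fun i _ => ?_
          rw [← Real.sqrt_eq_rpow]
          nlinarith [Real.sq_sqrt (hμ i), Real.sqrt_nonneg (μ i)]
      _ = (d:ℝ) + ∑ i, μ i := by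
          rw [Finset.sum_add_distrib, Finset.sum_const, Finset.card_univ, Fintype.card_fin,
            nsmul_eq_mul, mul_one]
      _ ≤ (d:ℝ) + 1 := by linarith
  have hnn : 0 ≤ (mpow K (1/2)).trace.re := by
    rw [htrsq]
    exact Finset.sum_nonneg fun i _ => Real.rpow_nonneg (hμ i) _
  show ((mpow K (1/2)).trace.re) ^ 2 ≤ ((d:ℝ) + 1) ^ 2
  exact pow_le_pow_left₀ hnn hb 2

end ChalfAux

theorem Chalf_ge_two_geometric {d : ℕ} (hd : 0 < d) (ρ : Matrix (Fin d) (Fin d) ℂ)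
    (hρ : ρ.PosDef) (hρtr : ρ.trace = 1) :
    sInf {c : ℝ | ∃ p : Fin d → ℝ, (∀ i, 0 ≤ p i) ∧ ∑ i, p i = 1 ∧
        c = 2 * (1 - (fhalf ρ (Matrix.diagonal (fun i => (p i : ℂ)))) ^ 2)} ≥
      2 * (1 - sSup {c : ℝ | ∃ p : Fin d → ℝ, (∀ i, 0 ≤ p i) ∧ ∑ i, p i = 1 ∧
        c = Fid ρ (Matrix.diagonal (fun i => (p i : ℂ)))}) := by
  set T := {c : ℝ | ∃ p : Fin d → ℝ, (∀ i, 0 ≤ p i) ∧ ∑ i, p i = 1 ∧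
      c = Fid ρ (Matrix.diagonal (fun i => (p i : ℂ)))} with hTdef
  have hpunif : (∀ i : Fin d, 0 ≤ (1:ℝ)/d) ∧ ∑ _i : Fin d, (1:ℝ)/d = 1 := by
    constructor
    · intro i; positivity
    · rw [Finset.sum_const, Finset.card_univ, Fintype.card_fin, nsmul_eq_mul]
      field_simp
  have hTbdd : BddAbove T := by
    refine ⟨((d:ℝ) + 1) ^ 2, fun c hc => ?_⟩
    obtain ⟨p, hp1, hp2, rfl⟩ := hc
    exact ChalfAux.Fid_le_bound ρ hρ hρtr p hp1 hp2
  rw [ge_iff_le]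
  refine le_csInf ⟨2 * (1 - (fhalf ρ (Matrix.diagonal (fun i => (((1:ℝ)/d : ℝ) : ℂ)))) ^ 2),
    fun _ => (1:ℝ)/d, hpunif.1, hpunif.2, rfl⟩ ?_
  intro c hc
  obtain ⟨p, hp1, hp2, rfl⟩ := hc
  have h1 : (fhalf ρ (Matrix.diagonal (fun i => (p i : ℂ)))) ^ 2
      ≤ Fid ρ (Matrix.diagonal (fun i => (p i : ℂ))) := ChalfAux.fhalf_sq_le_Fid ρ hρ p hp1
  have h2 : Fid ρ (Matrix.diagonal (fun i => (p i : ℂ))) ≤ sSup T :=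
    le_csSup hTbdd ⟨p, hp1, hp2, rfl⟩
  linarith
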